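/- Let X be a completely regular Hausdorff (Tychonoff) space and let H be a non-vanishing closed ideal of C_B(X). For a closed subideal M of H, the following are equivalent: (1) M is a maximal closed subideal of H (i.e., M is a proper closed subideal of H and is maximal among proper closed subideals of H); (2) there is a point x in λ_H X such that λ_M X = λ_H X \ {x}. -/

import Mathlib

open BoundedContinuousFunction Set Filter Topology

section Preamble

variable {X : Type*} [TopologicalSpace X] {𝕜 : Type*} [RCLike 𝕜]

theorem betaExt_aux (f : X →ᵇ 𝕜) :
    Continuous (fun x => (⟨f x, by
      simpa [Metric.mem_closedBall, dist_zero_right] using f.norm_coe_le_norm x⟩ :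
        Metric.closedBall (0 : 𝕜) ‖f‖)) :=
  f.continuous.subtype_mk _

/-- `f_β`, the unique continuous extension of a bounded continuous function `f : X → 𝕜` to the
Stone–Čech compactification `βX`. -/
noncomputable def betaExt (f : X →ᵇ 𝕜) : StoneCech X → 𝕜 :=
  haveI : CompactSpace (Metric.closedBall (0 : 𝕜) ‖f‖) :=
    isCompact_iff_compactSpace.mp (isCompact_closedBall 0 ‖f‖)
  fun p => (stoneCechExtend (betaExt_aux f) p).1

theorem betaExt_unit (f : X →ᵇ 𝕜) (x : X) : betaExt f (stoneCechUnit x) = f x := by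
  haveI : CompactSpace (Metric.closedBall (0 : 𝕜) ‖f‖) :=
    isCompact_iff_compactSpace.mp (isCompact_closedBall 0 ‖f‖)
  exact congrArg Subtype.val (congrFun (stoneCechExtend_extends (betaExt_aux f)) x)

theorem continuous_betaExt (f : X →ᵇ 𝕜) : Continuous (betaExt f) := by
  haveI : CompactSpace (Metric.closedBall (0 : 𝕜) ‖f‖) :=
    isCompact_iff_compactSpace.mp (isCompact_closedBall 0 ‖f‖)
  exact continuous_subtype_val.comp (continuous_stoneCechExtend _)

/-- `λ_G X`, the union over `g ∈ G` of the cozero-sets in `βX` of the extensions `g_β`. -/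
def lambdaSet (G : Ideal (X →ᵇ 𝕜)) : Set (StoneCech X) :=
  ⋃ g ∈ G, {p | betaExt g p ≠ 0}

end Preamble


section Helpers

variable {X : Type*} [TopologicalSpace X] {𝕜 : Type*} [RCLike 𝕜]

theorem betaExt_eq (f : X →ᵇ 𝕜) {g : StoneCech X → 𝕜} (hg : Continuous g)
    (h : ∀ x, g (stoneCechUnit x) = f x) : betaExt f = g :=
  Continuous.ext_on denseRange_stoneCechUnit (continuous_betaExt f) hg
    (fun p hp => by obtain ⟨x, rfl⟩ := hp; rw [betaExt_unit, h])

theorem norm_betaExt_le (f : X →ᵇ 𝕜) (p : StoneCech X) : ‖betaExt f p‖ ≤ ‖f‖ := by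
  haveI : CompactSpace (Metric.closedBall (0 : 𝕜) ‖f‖) :=
    isCompact_iff_compactSpace.mp (isCompact_closedBall 0 ‖f‖)
  have h2 := (stoneCechExtend (betaExt_aux f) p).2
  rw [Metric.mem_closedBall, dist_zero_right] at h2
  exact h2

theorem betaExt_zero : betaExt (0 : X →ᵇ 𝕜) = 0 :=
  betaExt_eq 0 continuous_const (fun _ => rfl)

theorem betaExt_mul (f g : X →ᵇ 𝕜) : betaExt (f * g) = betaExt f * betaExt g :=
  betaExt_eq _ ((continuous_betaExt f).mul (continuous_betaExt g))
    (fun x => by simp [betaExt_unit])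

theorem betaExt_sub (f g : X →ᵇ 𝕜) : betaExt (f - g) = betaExt f - betaExt g :=
  betaExt_eq _ ((continuous_betaExt f).sub (continuous_betaExt g))
    (fun x => by simp [betaExt_unit])

theorem lipschitz_betaExt_apply (p : StoneCech X) :
    LipschitzWith 1 (fun f : X →ᵇ 𝕜 => betaExt f p) := by
  refine LipschitzWith.of_dist_le_mul fun f g => ?_
  rw [dist_eq_norm, dist_eq_norm, NNReal.coe_one, one_mul]
  have : betaExt f p - betaExt g p = betaExt (f - g) p := by rw [betaExt_sub]; rfl
  rw [this]
  exact norm_betaExt_le _ p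

theorem isOpen_lambdaSet (G : Ideal (X →ᵇ 𝕜)) : IsOpen (lambdaSet G) :=
  isOpen_biUnion fun g _ => isOpen_compl_singleton.preimage (continuous_betaExt g)

end Helpers

section Ideals

variable {X : Type*} [TopologicalSpace X] {𝕜 : Type*} [RCLike 𝕜]

/-- The ideal of bounded continuous functions whose extension vanishes off `U`. -/
def idealOf (U : Set (StoneCech X)) : Ideal (X →ᵇ 𝕜) where
  carrier := {f | ∀ p ∉ U, betaExt f p = 0}
  add_mem' := by
    intro f g hf hg p hp
    have : betaExt (f + g) = betaExt f + betaExt g :=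
      betaExt_eq _ ((continuous_betaExt f).add (continuous_betaExt g))
        (fun x => by simp [betaExt_unit])
    rw [this]
    simp [hf p hp, hg p hp]
  zero_mem' := by intro p _; rw [betaExt_zero]; rfl
  smul_mem' := by
    intro c f hf p hp
    have : c • f = c * f := rfl
    rw [this, betaExt_mul]
    simp [hf p hp]

theorem mem_idealOf {U : Set (StoneCech X)} {f : X →ᵇ 𝕜} :
    f ∈ (idealOf U : Ideal (X →ᵇ 𝕜)) ↔ ∀ p ∉ U, betaExt f p = 0 := Iff.rfl

theorem isClosed_idealOf (U : Set (StoneCech X)) :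
    IsClosed ((idealOf U : Ideal (X →ᵇ 𝕜)) : Set (X →ᵇ 𝕜)) := by
  have : ((idealOf U : Ideal (X →ᵇ 𝕜)) : Set (X →ᵇ 𝕜)) =
      ⋂ p ∈ Uᶜ, (fun f : X →ᵇ 𝕜 => betaExt f p) ⁻¹' {0} := by
    ext f
    simp [mem_idealOf, mem_iInter]
  rw [this]
  exact isClosed_biInter fun p _ =>
    isClosed_singleton.preimage (lipschitz_betaExt_apply p).continuous

theorem idealOf_mono {U V : Set (StoneCech X)} (h : U ⊆ V) :
    (idealOf U : Ideal (X →ᵇ 𝕜)) ≤ idealOf V :=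
  fun f hf p hp => hf p (fun hpU => hp (h hpU))

theorem lambdaSet_mono {G₁ G₂ : Ideal (X →ᵇ 𝕜)} (h : G₁ ≤ G₂) :
    lambdaSet G₁ ⊆ lambdaSet G₂ := by
  intro p hp
  obtain ⟨s, ⟨g, rfl⟩, hs⟩ := hp
  obtain ⟨s', ⟨hg, rfl⟩, hps⟩ := hs
  exact mem_iUnion.mpr ⟨g, mem_iUnion.mpr ⟨h hg, hps⟩⟩

theorem mem_lambdaSet {G : Ideal (X →ᵇ 𝕜)} {p : StoneCech X} :
    p ∈ lambdaSet G ↔ ∃ g ∈ G, betaExt g p ≠ 0 := by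
  simp [lambdaSet]

theorem le_idealOf_lambdaSet (G : Ideal (X →ᵇ 𝕜)) : G ≤ idealOf (lambdaSet G) := by
  intro f hf p hp
  by_contra h
  exact hp (mem_lambdaSet.mpr ⟨f, hf, h⟩)

/-- `λ_{I_U} = U` for open `U`. -/
theorem lambdaSet_idealOf {U : Set (StoneCech X)} (hU : IsOpen U) :
    lambdaSet (idealOf U : Ideal (X →ᵇ 𝕜)) = U := by
  apply Subset.antisymm
  · intro p hp
    obtain ⟨g, hg, hne⟩ := mem_lambdaSet.mp hp
    by_contra h
    exact hne (hg p h)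
  · intro p hp
    obtain ⟨φ, hφ0, hφ1, hmemIcc⟩ := exists_continuous_zero_one_of_isClosed
      (isClosed_compl_iff.mpr hU) (isClosed_singleton (x := p))
      (disjoint_left.mpr fun q hq hq' => hq (mem_singleton_iff.mp hq' ▸ hp))
    set f : X →ᵇ 𝕜 := BoundedContinuousFunction.ofNormedAddCommGroup
      (fun x => ((φ (stoneCechUnit x) : ℝ) : 𝕜))
      (RCLike.continuous_ofReal.comp (φ.continuous.comp continuous_stoneCechUnit)) 1
      (fun x => by
        rw [RCLike.norm_ofReal, abs_le]
        have h := hmemIcc (stoneCechUnit x)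
        exact ⟨by linarith [h.1], h.2⟩) with hfdef
    have hext : betaExt f = fun q => ((φ q : ℝ) : 𝕜) :=
      betaExt_eq f (RCLike.continuous_ofReal.comp φ.continuous) (fun x => rfl)
    refine mem_lambdaSet.mpr ⟨f, ?_, ?_⟩
    · intro q hq
      rw [hext]
      simp [hφ0 hq]
    · rw [hext]
      have := hφ1 (mem_singleton p)
      simp only [this]
      simp

end Ideals

section KeyLemma

variable {X : Type*} [TopologicalSpace X] {𝕜 : Type*} [RCLike 𝕜]

open RCLike Finset in
theorem mem_of_betaExt_subset {G : Ideal (X →ᵇ 𝕜)} (hG : IsClosed (G : Set (X →ᵇ 𝕜)))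
    {f : X →ᵇ 𝕜} (hf : ∀ p, betaExt f p ≠ 0 → p ∈ lambdaSet G) : f ∈ G := by
  suffices h : ∀ ε > (0:ℝ), ∃ m ∈ G, dist f m ≤ ε by
    have hcl : f ∈ closure (G : Set (X →ᵇ 𝕜)) := by
      rw [Metric.mem_closure_iff]
      intro ε hε
      obtain ⟨m, hm, hd⟩ := h (ε/2) (by linarith)
      exact ⟨m, hm, lt_of_le_of_lt hd (by linarith)⟩
    rwa [hG.closure_eq] at hcl
  intro ε hε
  set K : Set (StoneCech X) := {p | ε ≤ ‖betaExt f p‖} with hKdef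
  have hKc : IsClosed K := isClosed_le continuous_const (continuous_betaExt f).norm
  have hKcpt : IsCompact K := hKc.isCompact
  have hKsub : K ⊆ ⋃ g : G, {p | betaExt (g : X →ᵇ 𝕜) p ≠ 0} := by
    intro p hp
    have hne0 : betaExt f p ≠ 0 := by
      intro h0
      have : ε ≤ ‖betaExt f p‖ := hp
      rw [h0, norm_zero] at this
      linarith
    obtain ⟨g, hg, hgne⟩ := mem_lambdaSet.mp (hf p hne0)
    exact mem_iUnion.mpr ⟨⟨g, hg⟩, hgne⟩
  obtain ⟨t, ht⟩ := hKcpt.elim_finite_subcover _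
    (fun g : G => isOpen_compl_singleton.preimage (continuous_betaExt (g : X →ᵇ 𝕜))) hKsub
  rcases K.eq_empty_or_nonempty with hKe | hKne
  · refine ⟨0, G.zero_mem, ?_⟩
    rw [dist_zero_right]
    refine (BoundedContinuousFunction.norm_le hε.le).mpr fun x => ?_
    by_contra hx
    push_neg at hx
    have : stoneCechUnit x ∈ K := by
      show ε ≤ ‖betaExt f (stoneCechUnit x)‖
      rw [betaExt_unit]; linarith
    rw [hKe] at this
    exact this
  · -- the function r on βX
    set r : StoneCech X → ℝ := fun p => ∑ i ∈ t, ‖betaExt (i : X →ᵇ 𝕜) p‖ ^ 2 with hrdef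
    have hrc : Continuous r := continuous_finset_sum _ fun i _ =>
      ((continuous_betaExt (i : X →ᵇ 𝕜)).norm).pow 2
    have hrnn : ∀ p, 0 ≤ r p := fun p => Finset.sum_nonneg fun i _ => by positivity
    have hrposK : ∀ p ∈ K, 0 < r p := by
      intro p hp
      obtain ⟨s, ⟨i, rfl⟩, hps⟩ := ht hp
      obtain ⟨s', ⟨hi, rfl⟩, hps'⟩ := hps
      refine Finset.sum_pos' (fun j _ => by positivity) ⟨i, hi, ?_⟩
      have hne : betaExt (i : X →ᵇ 𝕜) p ≠ 0 := hps'
      exact pow_pos (norm_pos_iff.mpr hne) 2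
    -- the element g of G
    set g : X →ᵇ 𝕜 := ∑ i ∈ t, star (i : X →ᵇ 𝕜) * (i : X →ᵇ 𝕜) with hgdef
    have hgG : g ∈ G := Ideal.sum_mem G fun i _ => G.mul_mem_left _ i.2
    have hgx : ∀ x : X, g x = ((r (stoneCechUnit x) : ℝ) : 𝕜) := by
      intro x
      rw [hgdef, BoundedContinuousFunction.sum_apply, hrdef]
      push_cast
      refine Finset.sum_congr rfl fun i _ => ?_
      rw [BoundedContinuousFunction.mul_apply, BoundedContinuousFunction.star_apply,
        betaExt_unit, RCLike.star_def, RCLike.conj_mul]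
    -- the minimum c of r on K
    obtain ⟨p₀, hp₀K, hp₀min⟩ := hKcpt.exists_isMinOn hKne hrc.continuousOn
    set c : ℝ := r p₀ with hcdef
    have hc : 0 < c := hrposK p₀ hp₀K
    set δ : ℝ := ε * c / (‖f‖ + 1) with hδdef
    have hnf : (0:ℝ) < ‖f‖ + 1 := by positivity
    have hδ : 0 < δ := by positivity
    -- the multiplier w
    have hwcont : Continuous fun x : X => f x * (((r (stoneCechUnit x) + δ)⁻¹ : ℝ) : 𝕜) := by
      refine f.continuous.mul (RCLike.continuous_ofReal.comp ?_)
      refine ((hrc.comp continuous_stoneCechUnit).add continuous_const).inv₀ fun x => ?_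
      have := hrnn (stoneCechUnit x)
      exact (add_pos_of_nonneg_of_pos this hδ).ne'
    set w : X →ᵇ 𝕜 := BoundedContinuousFunction.ofNormedAddCommGroup _ hwcont (‖f‖ * δ⁻¹)
      (fun x => by
        rw [norm_mul, RCLike.norm_ofReal]
        have h1 : ‖f x‖ ≤ ‖f‖ := f.norm_coe_le_norm x
        have h2 : |(r (stoneCechUnit x) + δ)⁻¹| ≤ δ⁻¹ := by
          rw [abs_of_nonneg (by have := hrnn (stoneCechUnit x); positivity)]
          exact inv_anti₀ hδ (by linarith [hrnn (stoneCechUnit x)])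
        exact mul_le_mul h1 h2 (abs_nonneg _) (norm_nonneg _)) with hwdef
    refine ⟨g * w, G.mul_mem_right w hgG, ?_⟩
    rw [BoundedContinuousFunction.dist_le hε.le]
    intro x
    rw [dist_eq_norm]
    set s : ℝ := r (stoneCechUnit x) with hsdef
    have hs0 : 0 ≤ s := hrnn _
    have hsδ : 0 < s + δ := by linarith
    have hval : f x - (g * w) x = f x * ((δ * (s + δ)⁻¹ : ℝ) : 𝕜) := by
      rw [BoundedContinuousFunction.mul_apply, hgx x]
      have hw : w x = f x * (((s + δ)⁻¹ : ℝ) : 𝕜) := rfl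
      rw [hw]
      have key : (1 : ℝ) - s * (s + δ)⁻¹ = δ * (s + δ)⁻¹ := by
        field_simp
        ring
      push_cast [← key]
      ring
    rw [hval, norm_mul, RCLike.norm_ofReal,
      abs_of_nonneg (by positivity : (0:ℝ) ≤ δ * (s + δ)⁻¹)]
    by_cases hxK : stoneCechUnit x ∈ K
    · have hsc : c ≤ s := hp₀min hxK
      have h1 : (s + δ)⁻¹ ≤ c⁻¹ := inv_anti₀ hc (by linarith)
      have h2 : δ * (s + δ)⁻¹ ≤ δ * c⁻¹ := by
        apply mul_le_mul_of_nonneg_left h1 hδ.le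
      have h3 : δ * c⁻¹ = ε / (‖f‖ + 1) := by
        rw [hδdef]
        field_simp
      have h4 : ‖f x‖ * (δ * (s + δ)⁻¹) ≤ ‖f‖ * (ε / (‖f‖ + 1)) := by
        rw [← h3]
        exact mul_le_mul (f.norm_coe_le_norm x) h2 (by positivity) (norm_nonneg f)
      refine h4.trans ?_
      rw [mul_div_assoc']
      rw [div_le_iff₀ hnf]
      nlinarith [norm_nonneg f]
    · have hfx : ‖f x‖ ≤ ε := by
        have : ¬ ε ≤ ‖betaExt f (stoneCechUnit x)‖ := hxK
        rw [betaExt_unit] at this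
        linarith
      have h5 : δ * (s + δ)⁻¹ ≤ 1 := by
        rw [← div_eq_mul_inv, div_le_one hsδ]
        linarith
      calc ‖f x‖ * (δ * (s + δ)⁻¹) ≤ ε * 1 :=
            mul_le_mul hfx h5 (by positivity) hε.le
        _ = ε := mul_one ε
end KeyLemma

section Main

variable {X : Type*} [TopologicalSpace X] {𝕜 : Type*} [RCLike 𝕜]

theorem eq_idealOf_lambdaSet {G : Ideal (X →ᵇ 𝕜)} (hG : IsClosed (G : Set (X →ᵇ 𝕜))) :
    G = idealOf (lambdaSet G) := by
  refine le_antisymm (le_idealOf_lambdaSet G) fun f hf => ?_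
  exact mem_of_betaExt_subset hG fun p hp => by
    by_contra hpl
    exact hp (hf p hpl)

end Main

/-- For a Tychonoff space `X`, a non-vanishing closed ideal `H` of `C_B(X)` and a closed
subideal `M` of `H`: `M` is a maximal closed subideal of `H` (proper, and maximal among proper
closed subideals of `H`) iff `λ_M X = λ_H X \ {x}` for some `x ∈ λ_H X`. -/
theorem maximal_closed_subideal_iff {X : Type*} [TopologicalSpace X] [T35Space X]
    {𝕜 : Type*} [RCLike 𝕜] (H M : Ideal (X →ᵇ 𝕜))
    (hcl : IsClosed (H : Set (X →ᵇ 𝕜))) (hnv : ∀ x : X, ∃ h ∈ H, h x ≠ 0)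
    (hMc : IsClosed (M : Set (X →ᵇ 𝕜))) (hMH : M ≤ H) :
    (M ≠ H ∧ ∀ N : Ideal (X →ᵇ 𝕜),
        IsClosed (N : Set (X →ᵇ 𝕜)) → N ≤ H → N ≠ H → M ≤ N → N = M) ↔
      ∃ x ∈ lambdaSet H, lambdaSet M = lambdaSet H \ {x} := by
  have hHeq := eq_idealOf_lambdaSet hcl
  have hMeq := eq_idealOf_lambdaSet hMc
  constructor
  · rintro ⟨hMne, hmax⟩
    have hsub : lambdaSet M ⊆ lambdaSet H := lambdaSet_mono hMH
    have hne : (lambdaSet H \ lambdaSet M).Nonempty := by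
      by_contra h
      rw [not_nonempty_iff_eq_empty, diff_eq_empty] at h
      exact hMne (by rw [hMeq, hHeq, Subset.antisymm hsub h])
    obtain ⟨x, hxH, hxM⟩ := hne
    refine ⟨x, hxH, ?_⟩
    set N : Ideal (X →ᵇ 𝕜) := idealOf (lambdaSet H \ {x}) with hNdef
    have hNopen : IsOpen (lambdaSet H \ {x}) :=
      (isOpen_lambdaSet H).sdiff isClosed_singleton
    have hNl : lambdaSet N = lambdaSet H \ {x} := lambdaSet_idealOf hNopen
    have hNH : N ≤ H := by rw [hHeq]; exact idealOf_mono diff_subset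
    have hMN : M ≤ N := by
      rw [hMeq]; exact idealOf_mono (subset_diff_singleton hsub hxM)
    have hNneH : N ≠ H := by
      intro h
      have hx' : x ∈ lambdaSet N := by rw [h]; exact hxH
      rw [hNl] at hx'
      exact hx'.2 rfl
    have hNM := hmax N (isClosed_idealOf _) hNH hNneH hMN
    rw [← hNM]
    exact hNl
  · rintro ⟨x, hxH, hlM⟩
    constructor
    · intro h
      rw [h] at hlM
      have : x ∈ lambdaSet H \ {x} := hlM ▸ hxH
      exact this.2 rfl
    · intro N hNc hNH hNneH hMN
      have hNeq := eq_idealOf_lambdaSet hNc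
      have hsubN : lambdaSet N ⊆ lambdaSet H := lambdaSet_mono hNH
      have hxN : x ∉ lambdaSet N := by
        intro hxN
        apply hNneH
        have hsup : lambdaSet H ⊆ lambdaSet N := by
          intro q hq
          by_cases hqx : q = x
          · rwa [hqx]
          · refine lambdaSet_mono hMN ?_
            rw [hlM]
            exact ⟨hq, hqx⟩
        rw [hNeq, hHeq, Subset.antisymm hsubN hsup]
      have hNle : N ≤ M := by
        rw [hNeq, hMeq]
        refine idealOf_mono ?_
        rw [hlM]
        exact subset_diff_singleton hsubN hxN
      exact le_antisymm hNle hMN
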